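/- Let a topological group G act continuously on topological spaces Z and Z̃, and let π : Z̃ → Z be a G-equivariant covering map. Suppose every point of Z has arbitrarily small open neighborhoods U such that for every z ∈ U the set {g ∈ G : g·z ∈ U} is connected. Then the induced map π̃ : Z̃/G → Z/G is a covering map. -/

import Mathlib

open MulAction Set Topology Relator

section Aux

variable {G Z Z' : Type*} [Group G] [TopologicalSpace G] [IsTopologicalGroup G]
    [TopologicalSpace Z] [TopologicalSpace Z']
    [MulAction G Z] [MulAction G Z'] [ContinuousSMul G Z] [ContinuousSMul G Z']
    (π : Z' → Z)

set_option linter.unusedSectionVars false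

theorem sheet_const {F : Type*} [TopologicalSpace F] [DiscreteTopology F]
    (t : Bundle.Trivialization F π) (hequiv : ∀ (g : G) (z : Z'), π (g • z) = g • π z)
    {U : Set Z} (hUb : U ⊆ t.baseSet)
    (hconn : ∀ z ∈ U, IsConnected {g : G | g • z ∈ U})
    {z' : Z'} (hz : π z' ∈ U) {g : G} (hg : g • π z' ∈ U) :
    (t (g • z')).2 = (t z').2 := by
  set S : Set G := {h : G | h • π z' ∈ U} with hS
  have hScon : IsConnected S := hconn _ hz
  have hφ : ContinuousOn (fun h : G => (t (h • z')).2) S := by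
    apply ContinuousOn.snd
    have hsm : Continuous (fun h : G => h • z') := continuous_id.smul continuous_const
    refine t.toOpenPartialHomeomorph.continuousOn.comp hsm.continuousOn ?_
    intro h hh
    exact t.mem_source.2 (by rw [hequiv]; exact hUb hh)
  have himg : IsPreconnected ((fun h : G => (t (h • z')).2) '' S) :=
    (hScon.image _ hφ).isPreconnected
  have hsub := himg.subsingleton
  have h1 : (1 : G) ∈ S := by simpa [hS, one_smul] using hz
  have := hsub (mem_image_of_mem _ hg) (mem_image_of_mem _ h1)
  simpa [one_smul] using this

theorem sheet_const' {F : Type*} [TopologicalSpace F] [DiscreteTopology F]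
    (t : Bundle.Trivialization F π) (hequiv : ∀ (g : G) (z : Z'), π (g • z) = g • π z)
    {U : Set Z} (hUb : U ⊆ t.baseSet)
    (hconn : ∀ z ∈ U, IsConnected {g : G | g • z ∈ U})
    {z' : Z'} {g₁ g₂ : G} (h₁ : g₁ • π z' ∈ U) (h₂ : g₂ • π z' ∈ U) :
    (t (g₁ • z')).2 = (t (g₂ • z')).2 := by
  have key := sheet_const π t hequiv hUb hconn (z' := g₁ • z') (g := g₂ * g₁⁻¹)
    (by rw [hequiv]; exact h₁)
    (by rw [hequiv]; rw [smul_smul, inv_mul_cancel_right]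
        exact h₂)
  rw [smul_smul, inv_mul_cancel_right] at key
  exact key.symm

theorem quot_evenly_empty (hcov : IsCoveringMap π)
    (hequiv : ∀ (g : G) (z : Z'), π (g • z) = g • π z)
    (hresp : ((MulAction.orbitRel G Z').r ⇒ (MulAction.orbitRel G Z).r) π π)
    (x : Quotient (MulAction.orbitRel G Z))
    (hE : IsEmpty ↥(π ⁻¹' {(Quotient.out x : Z)})) :
    IsEvenlyCovered (Quotient.map' π hresp) x (Quotient.map' π hresp ⁻¹' {x}) := by
  classical
  obtain ⟨_, V, hzV, hV, -, H, -⟩ := hcov (Quotient.out x : Z)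
  have hVe : ∀ e : Z', π e ∉ V := fun e he => hE.elim (H ⟨e, he⟩).2
  have hqopen : IsOpenMap (Quotient.mk'' : Z → Quotient (orbitRel G Z)) :=
    isOpenMap_quotient_mk'_mul
  have hxV : x ∈ (Quotient.mk'' '' V : Set (Quotient (orbitRel G Z))) :=
    ⟨_, hzV, Quotient.out_eq' x⟩
  have hpre : Quotient.map' π hresp ⁻¹' (Quotient.mk'' '' V) = ∅ := by
    ext q
    constructor
    swap
    · intro h; exact h.elim
    induction q using Quotient.inductionOn' with
    | h w =>
      rintro ⟨v, hv, hq⟩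
      have hq' : (Quotient.mk'' v : Quotient (orbitRel G Z)) = Quotient.mk'' (π w) := hq
      obtain ⟨g, hg⟩ :=
        MulAction.mem_orbit_iff.mp (MulAction.orbitRel_apply.mp (Quotient.eq''.mp hq'))
      exact (hVe (g • w) (by rw [hequiv, hg]; exact hv)).elim
  haveI : IsEmpty ↥(Quotient.map' π hresp ⁻¹' {x}) := by
    rw [Set.isEmpty_coe_sort]
    apply Set.eq_empty_of_subset_empty
    rw [← hpre]
    exact Set.preimage_mono (Set.singleton_subset_iff.mpr hxV)
  exact IsEvenlyCovered.of_preimage_eq_empty _ ((hqopen V hV).mem_nhds hxV) hpre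

theorem quot_evenly (hcov : IsCoveringMap π)
    (hequiv : ∀ (g : G) (z : Z'), π (g • z) = g • π z)
    (hU : ∀ z₀ : Z, ∀ V ∈ nhds z₀, ∃ U : Set Z, U ⊆ V ∧ IsOpen U ∧ z₀ ∈ U ∧
      ∀ z ∈ U, IsConnected {g : G | g • z ∈ U})
    (hresp : ((MulAction.orbitRel G Z').r ⇒ (MulAction.orbitRel G Z).r) π π)
    (x : Quotient (MulAction.orbitRel G Z)) :
    IsEvenlyCovered (Quotient.map' π hresp) x (Quotient.map' π hresp ⁻¹' {x}) := by
  classical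
  set z₀ : Z := Quotient.out x with hz₀
  by_cases hne : Nonempty ↥(π ⁻¹' {z₀})
  swap
  · exact quot_evenly_empty π hcov hequiv hresp x (not_nonempty_iff.mp hne)
  haveI := hne
  obtain ⟨hdisc, t, ht⟩ : DiscreteTopology ↥(π ⁻¹' {z₀}) ∧
      ∃ t : Bundle.Trivialization ↥(π ⁻¹' {z₀}) π, z₀ ∈ t.baseSet :=
    ⟨(hcov z₀).1, (hcov z₀).toTrivialization, (hcov z₀).mem_toTrivialization_baseSet⟩
  obtain ⟨U, hUb, hUo, hz₀U, hconn⟩ := hU z₀ t.baseSet (t.open_baseSet.mem_nhds ht)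
  set F : Type _ := ↥(π ⁻¹' {z₀}) with hF
  -- basic quotient facts
  have hqeq : ∀ a b : Z, (Quotient.mk'' a : Quotient (orbitRel G Z)) = Quotient.mk'' b ↔
      ∃ g : G, g • b = a := by
    intro a b
    rw [Quotient.eq'']
    exact (MulAction.orbitRel_apply).trans MulAction.mem_orbit_iff
  have hqmkZ : ∀ (g : G) (y : Z),
      (Quotient.mk'' (g • y) : Quotient (orbitRel G Z)) = Quotient.mk'' y := by
    intro g y
    exact Quotient.sound' ((MulAction.orbitRel_apply).mpr (MulAction.mem_orbit y g))
  have hqmkZ' : ∀ (g : G) (w : Z'),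
      (Quotient.mk'' (g • w) : Quotient (orbitRel G Z')) = Quotient.mk'' w := by
    intro g w
    exact Quotient.sound' ((MulAction.orbitRel_apply).mpr (MulAction.mem_orbit w g))
  have hπqcont : Continuous (Quotient.map' π hresp) := hcov.continuous.quotient_map' _
  have hπqmk : ∀ z' : Z', Quotient.map' π hresp (Quotient.mk'' z') = Quotient.mk'' (π z') :=
    fun z' => rfl
  have hqcont : Continuous (Quotient.mk'' : Z → Quotient (orbitRel G Z)) := continuous_quot_mk
  have hqopen : IsOpenMap (Quotient.mk'' : Z → Quotient (orbitRel G Z)) :=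
    isOpenMap_quotient_mk'_mul
  have hq'open : IsOpenMap (Quotient.mk'' : Z' → Quotient (orbitRel G Z')) :=
    isOpenMap_quotient_mk'_mul
  have hq'surj : Function.Surjective (Quotient.mk'' : Z' → Quotient (orbitRel G Z')) :=
    Quotient.mk''_surjective
  set B : Set (Quotient (orbitRel G Z)) := Quotient.mk'' '' U with hB
  have hBopen : IsOpen B := hqopen U hUo
  -- the forward function on Z'
  set f' : Z' → Quotient (orbitRel G Z) × F := fun z' =>
    (Quotient.mk'' (π z'),
     if h : ∃ g : G, g • π z' ∈ U then (t (h.choose • z')).2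
     else (t (Quotient.out (Quotient.mk'' (s₁ := orbitRel G Z') z'))).2) with hf'
  have hf'snd : ∀ (z' : Z') (g : G), g • π z' ∈ U →
      f' z' = (Quotient.mk'' (π z'), (t (g • z')).2) := by
    intro z' g hg
    have hex : ∃ g : G, g • π z' ∈ U := ⟨g, hg⟩
    simp only [hf', dif_pos hex]
    exact Prod.ext rfl (sheet_const' π t hequiv hUb hconn hex.choose_spec hg)
  have hf'inv : ∀ a b : Z', MulAction.orbitRel G Z' a b → f' a = f' b := by
    intro a b hab
    rw [MulAction.orbitRel_apply, MulAction.mem_orbit_iff] at hab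
    obtain ⟨g₀, rfl⟩ := hab
    by_cases hex : ∃ g : G, g • π b ∈ U
    · obtain ⟨g, hg⟩ := hex
      have hga : (g * g₀⁻¹) • π (g₀ • b) ∈ U := by
        rw [hequiv]; rw [smul_smul, inv_mul_cancel_right]; exact hg
      rw [hf'snd _ _ hga, hf'snd _ _ hg]
      refine Prod.ext ?_ ?_
      · show (Quotient.mk'' (π (g₀ • b)) : Quotient (orbitRel G Z)) = Quotient.mk'' (π b)
        rw [hequiv]; exact hqmkZ g₀ (π b)
      · show (t ((g * g₀⁻¹) • g₀ • b)).2 = (t (g • b)).2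
        rw [smul_smul, inv_mul_cancel_right]
    · have hexa : ¬ ∃ g : G, g • π (g₀ • b) ∈ U := by
        rintro ⟨h, hh⟩
        rw [hequiv, smul_smul] at hh
        exact hex ⟨h * g₀, hh⟩
      simp only [hf', dif_neg hex, dif_neg hexa]
      refine Prod.ext ?_ ?_
      · show (Quotient.mk'' (π (g₀ • b)) : Quotient (orbitRel G Z)) = Quotient.mk'' (π b)
        rw [hequiv]; exact hqmkZ g₀ (π b)
      · show (t (Quotient.out (Quotient.mk'' (s₁ := orbitRel G Z') (g₀ • b)))).2
            = (t (Quotient.out (Quotient.mk'' (s₁ := orbitRel G Z') b))).2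
        rw [hqmkZ' g₀ b]
  -- the inverse function
  set i' : Quotient (orbitRel G Z) × F → Quotient (orbitRel G Z') := fun p =>
    Quotient.mk'' (t.toOpenPartialHomeomorph.symm
      ((if h : ∃ u ∈ U, (Quotient.mk'' u : Quotient (orbitRel G Z)) = p.1 then h.choose else z₀),
        p.2)) with hi'
  have hW : ∀ u₁ u₂ : Z, u₁ ∈ U → u₂ ∈ U →
      (Quotient.mk'' u₁ : Quotient (orbitRel G Z)) = Quotient.mk'' u₂ →
      ∀ v : F, (Quotient.mk'' (t.toOpenPartialHomeomorph.symm (u₁, v)) : Quotient (orbitRel G Z')) =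
        Quotient.mk'' (t.toOpenPartialHomeomorph.symm (u₂, v)) := by
    intro u₁ u₂ hu₁ hu₂ hq v
    obtain ⟨g, hg⟩ := (hqeq u₁ u₂).mp hq
    set w : Z' := t.toOpenPartialHomeomorph.symm (u₂, v) with hw
    have hwt : (u₂, v) ∈ t.target := t.mem_target.2 (hUb hu₂)
    have hπw : π w = u₂ := t.proj_symm_apply hwt
    have htw : t w = (u₂, v) := t.apply_symm_apply hwt
    have hπwU : π w ∈ U := hπw ▸ hu₂
    have hgU : g • π w ∈ U := by rw [hπw, hg]; exact hu₁
    have hsnd : (t (g • w)).2 = v := by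
      rw [sheet_const π t hequiv hUb hconn hπwU hgU, htw]
    have hgw_src : g • w ∈ t.source := t.mem_source.2 (by rw [hequiv, hπw, hg]; exact hUb hu₁)
    have htgw : t (g • w) = (u₁, v) := by
      refine Prod.ext ?_ hsnd
      rw [t.coe_fst hgw_src, hequiv, hπw, hg]
    have hsymm : t.toOpenPartialHomeomorph.symm (u₁, v) = g • w := by
      rw [← htgw]
      exact t.toOpenPartialHomeomorph.left_inv hgw_src
    rw [hsymm, hqmkZ' g w]
  have hi'val : ∀ (u : Z), u ∈ U → ∀ v : F,
      i' (Quotient.mk'' u, v) = Quotient.mk'' (t.toOpenPartialHomeomorph.symm (u, v)) := by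
    intro u hu v
    have hex : ∃ u' ∈ U, (Quotient.mk'' u' : Quotient (orbitRel G Z)) = Quotient.mk'' u :=
      ⟨u, hu, rfl⟩
    simp only [hi', dif_pos hex]
    exact hW _ _ hex.choose_spec.1 hu hex.choose_spec.2 v
  -- continuity data for f'
  set W' : Set Z := {y : Z | ∃ g : G, g • y ∈ U} with hW'
  have hW'open : IsOpen W' := by
    have : W' = ⋃ g : G, (fun y : Z => g • y) ⁻¹' U := by
      ext y; simp [hW', mem_iUnion]
    rw [this]
    exact isOpen_iUnion fun g => hUo.preimage (continuous_const_smul g)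
  set O : Set Z' := π ⁻¹' W' with hO
  have hOopen : IsOpen O := hW'open.preimage hcov.continuous
  have hf'cont : ContinuousOn f' O := by
    intro p hp
    apply ContinuousAt.continuousWithinAt
    obtain ⟨g₀, hg₀⟩ := hp
    set N : Set Z' := π ⁻¹' ((fun y : Z => g₀ • y) ⁻¹' U) with hN
    have hNopen : IsOpen N := (hUo.preimage (continuous_const_smul g₀)).preimage hcov.continuous
    have hNmem : p ∈ N := hg₀
    have heq : Set.EqOn f'
        (fun z' : Z' => ((Quotient.mk'' (π z') : Quotient (orbitRel G Z)), (t (g₀ • z')).2)) N :=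
      fun z' hz' => hf'snd z' g₀ hz'
    have hFcont : ContinuousOn
        (fun z' : Z' => ((Quotient.mk'' (π z') : Quotient (orbitRel G Z)), (t (g₀ • z')).2)) N := by
      refine ContinuousOn.prodMk ?_ ?_
      · exact (hqcont.comp hcov.continuous).continuousOn
      · apply ContinuousOn.snd
        have hsm : Continuous fun z' : Z' => g₀ • z' := continuous_const_smul g₀
        refine t.toOpenPartialHomeomorph.continuousOn.comp hsm.continuousOn ?_
        intro z' hz'
        exact t.mem_source.2 (by rw [hequiv]; exact hUb hz')
    exact (hFcont.continuousAt (hNopen.mem_nhds hNmem)).congr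
      (Filter.eventuallyEq_of_mem (hNopen.mem_nhds hNmem) heq).symm
  -- preimage of source in Z'
  have hpre : (Quotient.mk'' : Z' → Quotient (orbitRel G Z')) ⁻¹'
      (Quotient.map' π hresp ⁻¹' B) = O := by
    ext z'
    simp only [mem_preimage, hπqmk, hB, hO, hW', mem_setOf_eq, mem_image]
    constructor
    · rintro ⟨u, hu, hqu⟩
      obtain ⟨g, hg⟩ := (hqeq u (π z')).mp hqu
      exact ⟨g, hg ▸ hu⟩
    · rintro ⟨g, hg⟩
      exact ⟨g • π z', hg, hqmkZ g (π z')⟩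
  -- the Ψ map for the inverse
  set Ψ : Z × F → Quotient (orbitRel G Z') := fun p =>
    Quotient.mk'' (t.toOpenPartialHomeomorph.symm p) with hΨ
  have hΨcont : ContinuousOn Ψ (U ×ˢ (univ : Set F)) := by
    have : ContinuousOn (t.toOpenPartialHomeomorph.symm) (U ×ˢ (univ : Set F)) := by
      refine t.toOpenPartialHomeomorph.continuousOn_symm.mono ?_
      rw [t.target_eq]
      exact Set.prod_mono hUb le_rfl
    exact continuous_quot_mk.comp_continuousOn this
  haveI := hdisc
  refine IsEvenlyCovered.to_isEvenlyCovered_preimage (IsEvenlyCovered.of_trivialization (t := {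
      toFun := Quot.lift f' hf'inv
      invFun := i'
      source := Quotient.map' π hresp ⁻¹' B
      target := B ×ˢ (univ : Set F)
      map_source' := ?_
      map_target' := ?_
      left_inv' := ?_
      right_inv' := ?_
      open_source := hBopen.preimage hπqcont
      open_target := hBopen.prod isOpen_univ
      continuousOn_toFun := ?_
      continuousOn_invFun := ?_
      baseSet := B
      open_baseSet := hBopen
      source_eq := rfl
      target_eq := rfl
      proj_toFun := ?_ }) ⟨z₀, hz₀U, Quotient.out_eq' x⟩)
  · -- map_source'
    intro p hp
    induction p using Quotient.inductionOn' with
    | h z' =>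
      exact ⟨hp, mem_univ _⟩
  · -- map_target'
    rintro ⟨y, v⟩ ⟨hy, -⟩
    obtain ⟨u, hu, hqu⟩ := hy
    subst hqu
    rw [hi'val u hu v]
    show Quotient.map' π hresp _ ∈ B
    rw [hπqmk, t.proj_symm_apply' (hUb hu)]
    exact ⟨u, hu, rfl⟩
  · -- left_inv'
    intro p hp
    induction p using Quotient.inductionOn' with
    | h z' =>
      obtain ⟨u, hu, hqu⟩ := hp
      obtain ⟨g, hg⟩ := (hqeq u (π z')).mp hqu
      have hgU : g • π z' ∈ U := hg ▸ hu
      show i' (Quot.lift f' hf'inv (Quotient.mk'' z')) = Quotient.mk'' z'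
      have hlift : Quot.lift f' hf'inv (Quotient.mk'' z') = f' z' := rfl
      rw [hlift, hf'snd z' g hgU]
      have h1 : (Quotient.mk'' (π z') : Quotient (orbitRel G Z)) = Quotient.mk'' u := hqu.symm
      rw [h1, hi'val u hu _]
      have hgsrc : g • z' ∈ t.source := t.mem_source.2 (by rw [hequiv, hg]; exact hUb hu)
      have htg : t (g • z') = (u, (t (g • z')).2) := by
        refine Prod.ext ?_ rfl
        rw [t.coe_fst hgsrc, hequiv, hg]
      have : t.toOpenPartialHomeomorph.symm (u, (t (g • z')).2) = g • z' := by
        rw [← htg]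
        exact t.toOpenPartialHomeomorph.left_inv hgsrc
      rw [this, hqmkZ' g z']
  · -- right_inv'
    rintro ⟨y, v⟩ ⟨hy, -⟩
    obtain ⟨u, hu, hqu⟩ := hy
    subst hqu
    rw [hi'val u hu v]
    set w : Z' := t.toOpenPartialHomeomorph.symm (u, v) with hw
    have hwt : (u, v) ∈ t.target := t.mem_target.2 (hUb hu)
    have hπw : π w = u := t.proj_symm_apply hwt
    have h1U : (1 : G) • π w ∈ U := by rw [one_smul, hπw]; exact hu
    show Quot.lift f' hf'inv (Quotient.mk'' w) = (Quotient.mk'' u, v)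
    have hlift : Quot.lift f' hf'inv (Quotient.mk'' w) = f' w := rfl
    rw [hlift, hf'snd w 1 h1U]
    refine Prod.ext ?_ ?_
    · show (Quotient.mk'' (π w) : Quotient (orbitRel G Z)) = Quotient.mk'' u
      rw [hπw]
    · show (t ((1 : G) • w)).2 = v
      rw [one_smul, hw, t.apply_symm_apply hwt]
  · -- continuousOn_toFun
    refine (continuousOn_open_iff (hBopen.preimage hπqcont)).2 ?_
    intro s hs
    have hopen : IsOpen (O ∩ f' ⁻¹' s) := (continuousOn_open_iff hOopen).1 hf'cont s hs
    have hopen2 : IsOpen ((Quotient.mk'' : Z' → Quotient (orbitRel G Z')) ⁻¹'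
        ((Quotient.map' π hresp ⁻¹' B) ∩ (Quot.lift f' hf'inv) ⁻¹' s)) := by
      rw [Set.preimage_inter, hpre]
      exact hopen
    rw [← Set.image_preimage_eq ((Quotient.map' π hresp ⁻¹' B) ∩
      (Quot.lift f' hf'inv) ⁻¹' s) hq'surj]
    exact hq'open _ hopen2
  · -- continuousOn_invFun
    rw [continuousOn_open_iff (hBopen.prod isOpen_univ)]
    intro s hs
    have hopen : IsOpen ((U ×ˢ (univ : Set F)) ∩ Ψ ⁻¹' s) :=
      (continuousOn_open_iff (hUo.prod isOpen_univ)).1 hΨcont s hs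
    have himg : (B ×ˢ (univ : Set F)) ∩ i' ⁻¹' s =
        (Prod.map (Quotient.mk'' : Z → Quotient (orbitRel G Z)) (id : F → F)) ''
          ((U ×ˢ (univ : Set F)) ∩ Ψ ⁻¹' s) := by
      ext ⟨y, v⟩
      constructor
      · rintro ⟨⟨hy, -⟩, hs'⟩
        obtain ⟨u, hu, hqu⟩ := hy
        subst hqu
        refine ⟨(u, v), ⟨⟨hu, mem_univ _⟩, ?_⟩, rfl⟩
        show Ψ (u, v) ∈ s
        have h2 : i' (Quotient.mk'' u, v) = Ψ (u, v) := hi'val u hu v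
        rw [← h2]
        exact hs'
      · rintro ⟨⟨u, v'⟩, ⟨⟨hu, -⟩, hΨs⟩, heq⟩
        have h1 : (Quotient.mk'' u : Quotient (orbitRel G Z)) = y := congrArg Prod.fst heq
        have h2 : v' = v := congrArg Prod.snd heq
        subst h2
        refine ⟨⟨h1 ▸ ⟨u, hu, rfl⟩, mem_univ _⟩, ?_⟩
        show i' (y, v') ∈ s
        rw [← h1, hi'val u hu v']
        exact hΨs
    rw [himg]
    exact (hqopen.prodMap IsOpenMap.id) _ hopen
  · -- proj_toFun
    intro p hp
    induction p using Quotient.inductionOn' with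
    | h z' =>
      show (Quot.lift f' hf'inv (Quotient.mk'' z')).1 = Quotient.map' π hresp (Quotient.mk'' z')
      rw [hπqmk z']
      rfl

end Aux

/-- If a topological group `G` acts continuously on `Z` and `Z̃`, `π : Z̃ → Z` is a
`G`-equivariant covering map, and every point of `Z` has arbitrarily small open
neighbourhoods `U` such that for every `z ∈ U` the set `{g : G | g • z ∈ U}` is connected,
then the induced map `Z̃/G → Z/G` is a covering map. -/
theorem stmt3 {G Z Z' : Type*} [Group G] [TopologicalSpace G] [IsTopologicalGroup G]
    [TopologicalSpace Z] [TopologicalSpace Z']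
    [MulAction G Z] [MulAction G Z'] [ContinuousSMul G Z] [ContinuousSMul G Z']
    (π : Z' → Z) (hcov : IsCoveringMap π)
    (hequiv : ∀ (g : G) (z : Z'), π (g • z) = g • π z)
    (hU : ∀ z₀ : Z, ∀ V ∈ nhds z₀, ∃ U : Set Z, U ⊆ V ∧ IsOpen U ∧ z₀ ∈ U ∧
      ∀ z ∈ U, IsConnected {g : G | g • z ∈ U}) :
    IsCoveringMap
      (Quotient.map' π
        (fun a b hab => by
          obtain ⟨g, hg⟩ := hab
          exact ⟨g, by rw [← hg, hequiv]⟩) :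
        Quotient (MulAction.orbitRel G Z') → Quotient (MulAction.orbitRel G Z)) := by
  intro x
  exact quot_evenly π hcov hequiv hU _ x
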